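/- With the sets F_n and D_n defined by the recursive Mex algorithm, for every n ≥ 0 the set F_n ∩ [Mex(F_n), Mex(F_n) + Mex(D_n) - 1] contains no 4 consecutive integers (i.e., there is no integer k with k, k+1, k+2, k+3 all in this set). -/
import Mathlib


/-- Minimum excluded value of a set of natural numbers. -/
noncomputable def mex (S : Set ℕ) : ℕ := sInf {m : ℕ | m ∉ S}

/-- Coordinates of a set of triples. -/
def coords (G : Set (ℕ × ℕ × ℕ)) : Set ℕ :=
  {k | ∃ x ∈ G, k = x.1 ∨ k = x.2.1 ∨ k = x.2.2}

/-- Pairwise coordinate differences of a set of triples. -/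
def diffs (G : Set (ℕ × ℕ × ℕ)) : Set ℕ :=
  {d | ∃ x ∈ G, d = x.2.1 - x.1 ∨ d = x.2.2 - x.2.1 ∨ d = x.2.2 - x.1}

/-- One step of the Mex algorithm: the next P-position. -/
noncomputable def step (G : Set (ℕ × ℕ × ℕ)) : ℕ × ℕ × ℕ :=
  let F := coords G
  let D := diffs G
  let a := mex F
  let b := mex ((fun d => a + d) '' D ∪ Set.Icc 1 a ∪ F)
  let c := mex ((fun d => b + d) '' D ∪ Set.Icc 1 b ∪ F)
  (a, b, c)

/-- The sets `G_n` of P-positions computed by the Mex algorithm. -/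
noncomputable def Gset : ℕ → Set (ℕ × ℕ × ℕ)
  | 0 => {(0, 0, 0)}
  | n + 1 => Gset n ∪ {step (Gset n)}

/-- The `n`-th P-position `(v_1(n), v_2(n), v_3(n))`. -/
noncomputable def v : ℕ → ℕ × ℕ × ℕ
  | 0 => (0, 0, 0)
  | n + 1 => step (Gset n)

noncomputable def v1 (n : ℕ) : ℕ := (v n).1
noncomputable def v2 (n : ℕ) : ℕ := (v n).2.1
noncomputable def v3 (n : ℕ) : ℕ := (v n).2.2

/-- `F_n`: the set of coordinates of elements of `G_n`. -/
noncomputable def Fset (n : ℕ) : Set ℕ := coords (Gset n)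

/-- `D_n`: the set of pairwise coordinate differences over `G_n`. -/
noncomputable def Dset (n : ℕ) : Set ℕ := diffs (Gset n)
-- mex basics
lemma mem_of_lt_mex {S : Set ℕ} {k : ℕ} (h : k < mex S) : k ∈ S := by
  by_contra hk
  simp only [mex] at h
  exact absurd (Nat.sInf_le (show k ∈ {m : ℕ | m ∉ S} from hk)) (by omega)

lemma mex_le_of_notMem {S : Set ℕ} {k : ℕ} (h : k ∉ S) : mex S ≤ k :=
  Nat.sInf_le h

lemma mex_notMem {S : Set ℕ} (hS : S.Finite) : mex S ∉ S := by
  have hne : {m : ℕ | m ∉ S}.Nonempty := by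
    have := hS.infinite_compl
    exact this.nonempty
  exact Nat.sInf_mem hne

lemma mex_mono {S T : Set ℕ} (hT : T.Finite) (h : S ⊆ T) : mex S ≤ mex T := by
  by_contra hc
  exact mex_notMem hT (h (mem_of_lt_mex (by omega)))

-- finiteness
lemma coords_finite {G : Set (ℕ × ℕ × ℕ)} (hG : G.Finite) : (coords G).Finite := by
  apply Set.Finite.subset (((hG.image Prod.fst).union (hG.image (fun x => x.2.1))).union
    (hG.image (fun x => x.2.2)))
  rintro k ⟨x, hx, h | h | h⟩
  · exact Or.inl (Or.inl ⟨x, hx, h.symm⟩)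
  · exact Or.inl (Or.inr ⟨x, hx, h.symm⟩)
  · exact Or.inr ⟨x, hx, h.symm⟩

lemma Gset_finite (n : ℕ) : (Gset n).Finite := by
  induction n with
  | zero => exact Set.finite_singleton _
  | succ n ih => exact ih.union (Set.finite_singleton _)

lemma Fset_finite (n : ℕ) : (Fset n).Finite := coords_finite (Gset_finite n)

lemma diffs_finite {G : Set (ℕ × ℕ × ℕ)} (hG : G.Finite) : (diffs G).Finite := by
  apply Set.Finite.subset (((hG.image (fun x => x.2.1 - x.1)).union
    (hG.image (fun x => x.2.2 - x.2.1))).union (hG.image (fun x => x.2.2 - x.1)))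
  rintro k ⟨x, hx, h | h | h⟩
  · exact Or.inl (Or.inl ⟨x, hx, h.symm⟩)
  · exact Or.inl (Or.inr ⟨x, hx, h.symm⟩)
  · exact Or.inr ⟨x, hx, h.symm⟩

lemma Dset_finite (n : ℕ) : (Dset n).Finite := diffs_finite (Gset_finite n)

-- Gset structure
lemma zero_mem_Gset (n : ℕ) : ((0,0,0) : ℕ × ℕ × ℕ) ∈ Gset n := by
  induction n with
  | zero => rfl
  | succ n ih => exact Or.inl ih

lemma Gset_succ (n : ℕ) : Gset (n+1) = Gset n ∪ {v (n+1)} := rfl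

lemma mem_Gset_iff {x : ℕ × ℕ × ℕ} {n : ℕ} :
    x ∈ Gset n ↔ x = (0,0,0) ∨ ∃ j, 1 ≤ j ∧ j ≤ n ∧ x = v j := by
  induction n with
  | zero =>
    simp only [Gset, Set.mem_singleton_iff]
    constructor
    · exact fun h => Or.inl h
    · rintro (h | ⟨j, h1, h2, h3⟩)
      · exact h
      · omega
  | succ n ih =>
    rw [Gset_succ]
    simp only [Set.mem_union, Set.mem_singleton_iff, ih]
    constructor
    · rintro ((h | ⟨j, h1, h2, h3⟩) | h)
      · exact Or.inl h
      · exact Or.inr ⟨j, h1, by omega, h3⟩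
      · exact Or.inr ⟨n+1, by omega, le_refl _, h⟩
    · rintro (h | ⟨j, h1, h2, h3⟩)
      · exact Or.inl (Or.inl h)
      · rcases Nat.lt_or_ge j (n+1) with hj | hj
        · exact Or.inl (Or.inr ⟨j, h1, by omega, h3⟩)
        · right; rwa [show j = n + 1 by omega] at h3
lemma v_mem_Gset (j : ℕ) : v j ∈ Gset j := by
  cases j with
  | zero => exact zero_mem_Gset 0
  | succ n => exact Or.inr rfl

lemma v1v2v3 (j : ℕ) : v j = (v1 j, v2 j, v3 j) := rfl

lemma mem_Fset_iff {x n : ℕ} :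
    x ∈ Fset n ↔ x = 0 ∨ ∃ j, 1 ≤ j ∧ j ≤ n ∧ (x = v1 j ∨ x = v2 j ∨ x = v3 j) := by
  constructor
  · rintro ⟨t, ht, hx⟩
    rcases mem_Gset_iff.1 ht with h0 | ⟨j, h1, h2, h3⟩
    · subst h0; simp at hx; omega
    · subst h3; exact Or.inr ⟨j, h1, h2, hx⟩
  · rintro (h0 | ⟨j, h1, h2, h3⟩)
    · exact ⟨(0,0,0), zero_mem_Gset n, by simp [h0]⟩
    · exact ⟨v j, mem_Gset_iff.2 (Or.inr ⟨j, h1, h2, rfl⟩), h3⟩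

lemma mem_Dset_iff {d n : ℕ} :
    d ∈ Dset n ↔ d = 0 ∨ ∃ j, 1 ≤ j ∧ j ≤ n ∧
      (d = v2 j - v1 j ∨ d = v3 j - v2 j ∨ d = v3 j - v1 j) := by
  constructor
  · rintro ⟨t, ht, hx⟩
    rcases mem_Gset_iff.1 ht with h0 | ⟨j, h1, h2, h3⟩
    · subst h0; simp at hx; omega
    · subst h3; exact Or.inr ⟨j, h1, h2, hx⟩
  · rintro (h0 | ⟨j, h1, h2, h3⟩)
    · exact ⟨(0,0,0), zero_mem_Gset n, by simp [h0]⟩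
    · exact ⟨v j, mem_Gset_iff.2 (Or.inr ⟨j, h1, h2, rfl⟩), h3⟩

lemma zero_mem_Fset (n : ℕ) : (0 : ℕ) ∈ Fset n := ⟨(0,0,0), zero_mem_Gset n, by simp⟩

lemma zero_mem_Dset (n : ℕ) : (0 : ℕ) ∈ Dset n := ⟨(0,0,0), zero_mem_Gset n, by simp⟩

lemma Gset_mono {m n : ℕ} (h : m ≤ n) : Gset m ⊆ Gset n := by
  induction n with
  | zero => rw [Nat.le_zero.1 h]
  | succ n ih =>
    rcases Nat.lt_or_ge m (n+1) with h' | h'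
    · exact fun x hx => Or.inl (ih (by omega) hx)
    · rw [show m = n + 1 by omega]

lemma Fset_mono {m n : ℕ} (h : m ≤ n) : Fset m ⊆ Fset n := by
  rintro x ⟨t, ht, hx⟩; exact ⟨t, Gset_mono h ht, hx⟩

lemma Dset_mono {m n : ℕ} (h : m ≤ n) : Dset m ⊆ Dset n := by
  rintro x ⟨t, ht, hx⟩; exact ⟨t, Gset_mono h ht, hx⟩

lemma Emono {m n : ℕ} (h : m ≤ n) : mex (Dset m) ≤ mex (Dset n) :=
  mex_mono (Dset_finite n) (Dset_mono h)

lemma Epos (n : ℕ) : 1 ≤ mex (Dset n) := by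
  by_contra h
  exact mex_notMem (Dset_finite n) (by rw [show mex (Dset n) = 0 by omega]; exact zero_mem_Dset n)

-- step equations
noncomputable def Sb (n : ℕ) : Set ℕ :=
  (fun d => v1 (n+1) + d) '' Dset n ∪ Set.Icc 1 (v1 (n+1)) ∪ Fset n

noncomputable def Sc (n : ℕ) : Set ℕ :=
  (fun d => v2 (n+1) + d) '' Dset n ∪ Set.Icc 1 (v2 (n+1)) ∪ Fset n

lemma v1_succ (n : ℕ) : v1 (n+1) = mex (Fset n) := rfl

lemma v2_succ (n : ℕ) : v2 (n+1) = mex (Sb n) := rfl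

lemma v3_succ (n : ℕ) : v3 (n+1) = mex (Sc n) := rfl

lemma Sb_finite (n : ℕ) : (Sb n).Finite :=
  (((Dset_finite n).image _).union (Set.finite_Icc _ _)).union (Fset_finite n)

lemma Sc_finite (n : ℕ) : (Sc n).Finite :=
  (((Dset_finite n).image _).union (Set.finite_Icc _ _)).union (Fset_finite n)

lemma b_notMem (n : ℕ) : v2 (n+1) ∉ Sb n := by
  rw [v2_succ]; exact mex_notMem (Sb_finite n)

lemma c_notMem (n : ℕ) : v3 (n+1) ∉ Sc n := by
  rw [v3_succ]; exact mex_notMem (Sc_finite n)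

lemma A_notMem (n : ℕ) : v1 (n+1) ∉ Fset n := by
  rw [v1_succ]; exact mex_notMem (Fset_finite n)

lemma A_pos (n : ℕ) : 1 ≤ v1 (n+1) := by
  rcases Nat.eq_zero_or_pos (v1 (n+1)) with h | h
  · exact absurd (h ▸ zero_mem_Fset n) (A_notMem n)
  · exact h

lemma b_notMem_F (n : ℕ) : v2 (n+1) ∉ Fset n := fun h => b_notMem n (Or.inr h)

lemma c_notMem_F (n : ℕ) : v3 (n+1) ∉ Fset n := fun h => c_notMem n (Or.inr h)

lemma a_lt_b (n : ℕ) : v1 (n+1) < v2 (n+1) := by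
  by_contra h
  have hb0 : v2 (n+1) ≠ 0 := fun h0 => b_notMem_F n (h0 ▸ zero_mem_Fset n)
  exact b_notMem n (Or.inl (Or.inr ⟨by omega, by omega⟩))

lemma b_lt_c (n : ℕ) : v2 (n+1) < v3 (n+1) := by
  by_contra h
  have hc0 : v3 (n+1) ≠ 0 := fun h0 => c_notMem_F n (h0 ▸ zero_mem_Fset n)
  exact c_notMem n (Or.inl (Or.inr ⟨by omega, by omega⟩))

lemma theta_le_b (n : ℕ) : v1 (n+1) + mex (Dset n) ≤ v2 (n+1) := by
  by_contra h
  have hab := a_lt_b n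
  have hd : v2 (n+1) - v1 (n+1) ∈ Dset n := mem_of_lt_mex (by omega)
  exact b_notMem n (Or.inl (Or.inl ⟨v2 (n+1) - v1 (n+1), hd, by simp only []; omega⟩))

lemma bE_le_c (n : ℕ) : v2 (n+1) + mex (Dset n) ≤ v3 (n+1) := by
  by_contra h
  have hbc := b_lt_c n
  have hd : v3 (n+1) - v2 (n+1) ∈ Dset n := mem_of_lt_mex (by omega)
  exact c_notMem n (Or.inl (Or.inl ⟨v3 (n+1) - v2 (n+1), hd, by simp only []; omega⟩))

-- v1 strictly increasing
lemma v1_mem_Fset (j : ℕ) (hj : 1 ≤ j) : v1 j ∈ Fset j :=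
  ⟨v j, v_mem_Gset j, Or.inl rfl⟩

lemma v2_mem_Fset (j : ℕ) : v2 j ∈ Fset j := ⟨v j, v_mem_Gset j, Or.inr (Or.inl rfl)⟩

lemma v3_mem_Fset (j : ℕ) : v3 j ∈ Fset j := ⟨v j, v_mem_Gset j, Or.inr (Or.inr rfl)⟩

lemma v1_lt_succ (j : ℕ) (hj : 1 ≤ j) : v1 j < v1 (j+1) := by
  obtain ⟨m, rfl⟩ : ∃ m, j = m + 1 := ⟨j - 1, by omega⟩
  have h1 : v1 (m+1) ∈ Fset (m+1) := v1_mem_Fset _ (by omega)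
  have h2 : v1 (m+1+1) ∉ Fset (m+1) := A_notMem (m+1)
  have h3 : ∀ k, k < v1 (m+1) → k ∈ Fset (m+1) := by
    intro k hk
    exact Fset_mono (Nat.le_succ m) (mem_of_lt_mex (by rw [← v1_succ]; omega))
  by_contra h
  rcases Nat.lt_or_ge (v1 (m+1+1)) (v1 (m+1)) with h' | h'
  · exact h2 (h3 _ h')
  · have : v1 (m+1+1) = v1 (m+1) := by omega
    exact h2 (this ▸ h1)

lemma v1_lt_of_lt {i j : ℕ} (hi : 1 ≤ i) (hij : i < j) : v1 i < v1 j := by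
  induction j with
  | zero => omega
  | succ n ih =>
    rcases Nat.lt_or_ge i n with h | h
    · exact lt_trans (ih h) (v1_lt_succ n (by omega))
    · rcases Nat.eq_or_lt_of_le h with h' | h'
      · exact h' ▸ v1_lt_succ i hi
      · omega
def Pn (n : ℕ) : Prop :=
  v3 (n+1) = v2 (n+1) + mex (Dset n) ∧
  v2 (n+1) + 1 ≤ v1 (n+1) + mex (Dset (n+1)) ∧
  ∀ x ∈ Fset (n+1), x ≤ v3 (n+1)

lemma theta_bound (n : ℕ) (hIH : ∀ m, m < n → Pn m) :
    ∀ j, 1 ≤ j → j ≤ n → v2 j + 2 ≤ v1 (n+1) + mex (Dset n) := by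
  intro j hj1 hj2
  obtain ⟨m, rfl⟩ : ∃ m, j = m + 1 := ⟨j - 1, by omega⟩
  have h1 := (hIH m (by omega)).2.1
  have h2 : v1 (m+1) < v1 (n+1) := v1_lt_of_lt (by omega) (by omega)
  have h3 : mex (Dset (m+1)) ≤ mex (Dset n) := Emono (by omega)
  omega

lemma Egap_of (n : ℕ) (hIH : ∀ m, m < n → Pn m) :
    ∀ m, m < n → mex (Dset m) + 1 ≤ mex (Dset (m+1)) := by
  intro m hm
  have h1 := (hIH m hm).2.1
  have h2 := theta_le_b m
  omega

lemma cgap_step (n : ℕ) (hIH : ∀ m, m < n → Pn m) :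
    ∀ m, 1 ≤ m → m < n → v3 m + 3 ≤ v3 (m+1) := by
  intro m hm1 hm2
  obtain ⟨t, rfl⟩ : ∃ t, m = t + 1 := ⟨m - 1, by omega⟩
  have p1m := (hIH (t+1) hm2).1
  have p1t := (hIH t (by omega)).1
  have tb := theta_bound (t+1) (fun m' hm' => hIH m' (by omega)) (t+1) (by omega) le_rfl
  have tlb := theta_le_b (t+1)
  have eg := Egap_of n hIH t (by omega)
  omega

lemma cgap_pair (n : ℕ) (hIH : ∀ m, m < n → Pn m) :
    ∀ i j, 1 ≤ i → i < j → j ≤ n → v3 i + 3 ≤ v3 j := by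
  intro i j hi hij hj
  induction j with
  | zero => omega
  | succ t ih =>
    rcases Nat.lt_or_ge i t with h | h
    · have h1 := ih (by omega) (by omega)
      have h2 := cgap_step n hIH t (by omega) (by omega)
      omega
    · have : i = t := by omega
      subst this
      exact cgap_step n hIH i hi (by omega)

lemma cagap_step (n : ℕ) (hIH : ∀ m, m < n → Pn m) :
    ∀ m, 1 ≤ m → m < n → v3 m + v1 (m+1) + 2 ≤ v3 (m+1) + v1 m := by
  intro m hm1 hm2
  obtain ⟨t, rfl⟩ : ∃ t, m = t + 1 := ⟨m - 1, by omega⟩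
  have p1m := (hIH (t+1) hm2).1
  have p1t := (hIH t (by omega)).1
  have p4t := (hIH t (by omega)).2.1
  have tlb := theta_le_b (t+1)
  have eg := Egap_of n hIH t (by omega)
  omega

lemma cagap_pair (n : ℕ) (hIH : ∀ m, m < n → Pn m) :
    ∀ i j, 1 ≤ i → i < j → j ≤ n → v3 i + v1 j + 2 ≤ v3 j + v1 i := by
  intro i j hi hij hj
  induction j with
  | zero => omega
  | succ t ih =>
    rcases Nat.lt_or_ge i t with h | h
    · have h1 := ih (by omega) (by omega)
      have h2 := cagap_step n hIH t (by omega) (by omega)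
      omega
    · have : i = t := by omega
      subst this
      exact cagap_step n hIH i hi (by omega)

lemma window (n : ℕ) (hIH : ∀ m, m < n → Pn m) :
    ∀ x ∈ Fset n, v1 (n+1) + mex (Dset n) ≤ x → x ≤ v1 (n+1) + mex (Dset n) + 2 →
      ∃ j, 1 ≤ j ∧ j ≤ n ∧ x = v3 j := by
  intro x hx hlo hhi
  have hA1 := A_pos n
  have hE1 := Epos n
  rcases mem_Fset_iff.1 hx with h0 | ⟨j, hj1, hj2, h3 | h3 | h3⟩
  · omega
  · have := v1_lt_of_lt (i := j) (j := n+1) hj1 (by omega)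
    omega
  · have := theta_bound n hIH j hj1 hj2
    omega
  · exact ⟨j, hj1, hj2, h3⟩

lemma Dtail (n : ℕ) (hIH : ∀ m, m < n → Pn m) :
    ∀ e ∈ Dset n, mex (Dset n) < e → e ≤ mex (Dset n) + 2 →
      ∃ j, 1 ≤ j ∧ j ≤ n ∧ v3 j = v1 j + e := by
  intro e he hlo hhi
  rcases mem_Dset_iff.1 he with h0 | ⟨j, hj1, hj2, h3 | h3 | h3⟩
  · have := Epos n
    omega
  · obtain ⟨t, rfl⟩ : ∃ t, j = t + 1 := ⟨j - 1, by omega⟩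
    have p4 := (hIH t (by omega)).2.1
    have hm : mex (Dset (t+1)) ≤ mex (Dset n) := Emono (by omega)
    have hab := a_lt_b t
    omega
  · obtain ⟨t, rfl⟩ : ∃ t, j = t + 1 := ⟨j - 1, by omega⟩
    have p1 := (hIH t (by omega)).1
    have hm : mex (Dset t) ≤ mex (Dset n) := Emono (by omega)
    omega
  · obtain ⟨t, rfl⟩ : ∃ t, j = t + 1 := ⟨j - 1, by omega⟩
    have hab := a_lt_b t
    have hbc := b_lt_c t
    exact ⟨t+1, by omega, hj2, by omega⟩
lemma Pn_all : ∀ n, Pn n := by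
  intro n
  induction n using Nat.strong_induction_on with
  | _ n hIH =>
  have hA1 : 1 ≤ v1 (n+1) := A_pos n
  have hE1 : 1 ≤ mex (Dset n) := Epos n
  have hED : mex (Dset n) ∉ Dset n := mex_notMem (Dset_finite n)
  have htlb := theta_le_b n
  -- the three-way split for b
  have tri : v2 (n+1) = v1 (n+1) + mex (Dset n) ∨
      v2 (n+1) = v1 (n+1) + mex (Dset n) + 1 ∨
      (v2 (n+1) = v1 (n+1) + mex (Dset n) + 2 ∧ mex (Dset n) + 1 ∈ Dset n) := by
    by_cases hθ : v1 (n+1) + mex (Dset n) ∈ Fset n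
    · obtain ⟨i, hi1, hi2, hieq⟩ := window n hIH _ hθ le_rfl (by omega)
      have hne1 : v1 (n+1) + mex (Dset n) + 1 ∉ Fset n := by
        intro h
        obtain ⟨j, hj1, hj2, hjeq⟩ := window n hIH _ h (by omega) (by omega)
        have hij : i ≠ j := by intro h'; rw [h'] at hieq; omega
        rcases Nat.lt_or_ge i j with h' | h'
        · have := cgap_pair n hIH i j hi1 h' hj2; omega
        · have := cgap_pair n hIH j i hj1 (by omega) hi2; omega
      have hne2 : v1 (n+1) + mex (Dset n) + 2 ∉ Fset n := by
        intro h
        obtain ⟨j, hj1, hj2, hjeq⟩ := window n hIH _ h (by omega) (by omega)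
        have hij : i ≠ j := by intro h'; rw [h'] at hieq; omega
        rcases Nat.lt_or_ge i j with h' | h'
        · have := cgap_pair n hIH i j hi1 h' hj2; omega
        · have := cgap_pair n hIH j i hj1 (by omega) hi2; omega
      have hbne0 : v2 (n+1) ≠ v1 (n+1) + mex (Dset n) := by
        intro h; exact b_notMem_F n (h ▸ hθ)
      by_cases hD1 : mex (Dset n) + 1 ∈ Dset n
      · right; right
        have hD2 : mex (Dset n) + 2 ∉ Dset n := by
          intro hD2
          obtain ⟨j, hj1, hj2, hjeq⟩ := Dtail n hIH _ hD1 (by omega) (by omega)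
          obtain ⟨j', hj'1, hj'2, hj'eq⟩ := Dtail n hIH _ hD2 (by omega) (by omega)
          have hjj : j ≠ j' := by intro h'; rw [h'] at hjeq; omega
          rcases Nat.lt_or_ge j j' with h' | h'
          · have := cagap_pair n hIH j j' hj1 h' hj'2; omega
          · have := cagap_pair n hIH j' j hj'1 (by omega) hj2; omega
        have hub : v2 (n+1) ≤ v1 (n+1) + mex (Dset n) + 2 := by
          rw [v2_succ]
          apply mex_le_of_notMem
          rintro ((⟨d, hd, hdeq⟩ | hIcc) | hF)
          · simp only [] at hdeq
            have : d = mex (Dset n) + 2 := by omega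
            exact hD2 (this ▸ hd)
          · rw [Set.mem_Icc] at hIcc; omega
          · exact hne2 hF
        have hb1 : v2 (n+1) ≠ v1 (n+1) + mex (Dset n) + 1 := by
          intro h
          exact b_notMem n (Or.inl (Or.inl ⟨mex (Dset n) + 1, hD1, by simp only []; omega⟩))
        exact ⟨by omega, hD1⟩
      · right; left
        have hub : v2 (n+1) ≤ v1 (n+1) + mex (Dset n) + 1 := by
          rw [v2_succ]
          apply mex_le_of_notMem
          rintro ((⟨d, hd, hdeq⟩ | hIcc) | hF)
          · simp only [] at hdeq
            have : d = mex (Dset n) + 1 := by omega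
            exact hD1 (this ▸ hd)
          · rw [Set.mem_Icc] at hIcc; omega
          · exact hne1 hF
        omega
    · left
      have hub : v2 (n+1) ≤ v1 (n+1) + mex (Dset n) := by
        rw [v2_succ]
        apply mex_le_of_notMem
        rintro ((⟨d, hd, hdeq⟩ | hIcc) | hF)
        · simp only [] at hdeq
          have : d = mex (Dset n) := by omega
          exact hED (this ▸ hd)
        · rw [Set.mem_Icc] at hIcc; omega
        · exact hθ hF
      omega
  -- p1 : c = b + E
  have hp1 : v3 (n+1) = v2 (n+1) + mex (Dset n) := by
    apply le_antisymm _ (bE_le_c n)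
    rw [v3_succ]
    apply mex_le_of_notMem
    rintro ((⟨d, hd, hdeq⟩ | hIcc) | hF)
    · simp only [] at hdeq
      have : d = mex (Dset n) := by omega
      exact hED (this ▸ hd)
    · rw [Set.mem_Icc] at hIcc; omega
    · cases n with
      | zero =>
        rcases mem_Fset_iff.1 hF with h0 | ⟨j, hj1, hj2, _⟩
        · omega
        · omega
      | succ t =>
        have p5 := (hIH t (by omega)).2.2 _ hF
        have p1t := (hIH t (by omega)).1
        have tb := theta_bound (t+1) hIH (t+1) (by omega) le_rfl
        have hm : mex (Dset t) ≤ mex (Dset (t+1)) := Emono (by omega)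
        omega
  -- p4
  have hp4 : v2 (n+1) + 1 ≤ v1 (n+1) + mex (Dset (n+1)) := by
    have hEmem : mex (Dset n) ∈ Dset (n+1) :=
      mem_Dset_iff.2 (Or.inr ⟨n+1, by omega, le_rfl, Or.inr (Or.inl (by omega))⟩)
    have hbamem : v2 (n+1) - v1 (n+1) ∈ Dset (n+1) :=
      mem_Dset_iff.2 (Or.inr ⟨n+1, by omega, le_rfl, Or.inl rfl⟩)
    have hmem : ∀ k, v1 (n+1) + k ≤ v2 (n+1) → k ∈ Dset (n+1) := by
      intro k hk
      rcases Nat.lt_or_ge k (mex (Dset n)) with h | h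
      · exact Dset_mono (Nat.le_succ n) (mem_of_lt_mex h)
      · rcases tri with h1 | h1 | ⟨h1, h2⟩
        · have : k = mex (Dset n) := by omega
          exact this ▸ hEmem
        · rcases (show k = mex (Dset n) ∨ k = mex (Dset n) + 1 by omega) with h' | h'
          · exact h' ▸ hEmem
          · have : k = v2 (n+1) - v1 (n+1) := by omega
            exact this ▸ hbamem
        · rcases (show k = mex (Dset n) ∨ k = mex (Dset n) + 1 ∨ k = mex (Dset n) + 2 by omega)
            with h' | h' | h'
          · exact h' ▸ hEmem
          · exact h' ▸ Dset_mono (Nat.le_succ n) h2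
          · have : k = v2 (n+1) - v1 (n+1) := by omega
            exact this ▸ hbamem
    by_contra hc
    exact mex_notMem (Dset_finite (n+1)) (hmem _ (by omega))
  -- p5
  have hp5 : ∀ x ∈ Fset (n+1), x ≤ v3 (n+1) := by
    intro x hx
    have hab := a_lt_b n
    have hbc := b_lt_c n
    rcases mem_Fset_iff.1 hx with h0 | ⟨j, hj1, hj2, hj3⟩
    · omega
    · rcases Nat.lt_or_ge j (n+1) with hj | hj
      · have hxF : x ∈ Fset n := mem_Fset_iff.2 (Or.inr ⟨j, hj1, by omega, hj3⟩)
        cases n with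
        | zero => omega
        | succ t =>
          have p5 := (hIH t (by omega)).2.2 _ hxF
          have p1t := (hIH t (by omega)).1
          have tb := theta_bound (t+1) hIH (t+1) (by omega) le_rfl
          have hm : mex (Dset t) ≤ mex (Dset (t+1)) := Emono (by omega)
          omega
      · have : j = n + 1 := by omega
        subst this
        rcases hj3 with h | h | h <;> omega
  exact ⟨hp1, hp4, hp5⟩
lemma v2_gap : ∀ i j, 1 ≤ i → i < j → v2 i + 2 ≤ v2 j := by
  intro i j hi hij
  obtain ⟨t, rfl⟩ : ∃ t, j = t + 1 := ⟨j - 1, by omega⟩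
  have h1 := theta_bound t (fun m _ => Pn_all m) i hi (by omega)
  have h2 := theta_le_b t
  omega

lemma v3_gap : ∀ i j, 1 ≤ i → i < j → v3 i + 3 ≤ v3 j := by
  intro i j hi hij
  exact cgap_pair j (fun m _ => Pn_all m) i j hi hij le_rfl
theorem stmt14 : ∀ n : ℕ,
    ¬ ∃ k : ℕ, ∀ i : ℕ, i < 4 →
      k + i ∈ Fset n ∩ Set.Icc (mex (Fset n)) (mex (Fset n) + mex (Dset n) - 1) := by
  rintro n ⟨k, hk⟩
  have hA1 : 1 ≤ v1 (n+1) := A_pos n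
  have classify : ∀ i, i < 4 →
      (∃ j, 1 ≤ j ∧ j ≤ n ∧ k + i = v2 j) ∨ (∃ j, 1 ≤ j ∧ j ≤ n ∧ k + i = v3 j) := by
    intro i hi
    obtain ⟨hF, hIcc⟩ := hk i hi
    rw [Set.mem_Icc] at hIcc
    have hA : v1 (n+1) ≤ k + i := by rw [v1_succ]; exact hIcc.1
    rcases mem_Fset_iff.1 hF with h0 | ⟨j, hj1, hj2, h | h | h⟩
    · omega
    · have := v1_lt_of_lt (i := j) (j := n+1) hj1 (by omega)
      omega
    · exact Or.inl ⟨j, hj1, hj2, h⟩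
    · exact Or.inr ⟨j, hj1, hj2, h⟩
  have hBB : ∀ x y : ℕ, (∃ j, 1 ≤ j ∧ j ≤ n ∧ x = v2 j) → (∃ j, 1 ≤ j ∧ j ≤ n ∧ y = v2 j) →
      x + 1 = y → False := by
    rintro x y ⟨j1, h11, h12, e1⟩ ⟨j2, h21, h22, e2⟩ hxy
    rcases lt_trichotomy j1 j2 with h | h | h
    · have := v2_gap j1 j2 h11 h; omega
    · subst h; omega
    · have := v2_gap j2 j1 h21 h; omega
  have hCC : ∀ x y : ℕ, (∃ j, 1 ≤ j ∧ j ≤ n ∧ x = v3 j) → (∃ j, 1 ≤ j ∧ j ≤ n ∧ y = v3 j) →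
      x < y → y ≤ x + 2 → False := by
    rintro x y ⟨j1, h11, h12, e1⟩ ⟨j2, h21, h22, e2⟩ h1 h2
    rcases lt_trichotomy j1 j2 with h | h | h
    · have := v3_gap j1 j2 h11 h; omega
    · subst h; omega
    · have := v3_gap j2 j1 h21 h; omega
  rcases classify 0 (by omega) with B0 | C0
  · rcases classify 1 (by omega) with B1 | C1
    · exact hBB _ _ B0 B1 (by omega)
    · rcases classify 2 (by omega) with B2 | C2
      · rcases classify 3 (by omega) with B3 | C3
        · exact hBB _ _ B2 B3 (by omega)
        · exact hCC _ _ C1 C3 (by omega) (by omega)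
      · exact hCC _ _ C1 C2 (by omega) (by omega)
  · rcases classify 1 (by omega) with B1 | C1
    · rcases classify 2 (by omega) with B2 | C2
      · exact hBB _ _ B1 B2 (by omega)
      · exact hCC _ _ C0 C2 (by omega) (by omega)
    · exact hCC _ _ C0 C1 (by omega) (by omega)
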